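/- arXiv:2508.07207 — 2 statements merged into one kernel-verified Lean document; each statement's English description precedes it below -/
import Mathlib

section
/- If a set S ⊆ ℤ has periods p₁ and p₂ (i.e., there exists x₀ such that for all x with |x| ≥ x₀, x + pᵢ ∈ S ↔ x ∈ S), then gcd(p₁, p₂) is also a period of S. -/
/-- `p` is a period of `S ⊆ ℤ`: there is a threshold `x₀` such that for all `x`
with `|x| ≥ x₀`, `x + p ∈ S ↔ x ∈ S`. -/
def IsPeriod (S : Set ℤ) (p : ℕ) : Prop :=
  ∃ x₀ : ℕ, ∀ x : ℤ, (x₀ : ℤ) ≤ |x| → ((x + p ∈ S) ↔ x ∈ S)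

lemma shift_nat_add (S : Set ℤ) (p : ℕ) (x₀ : ℕ)
    (h : ∀ x : ℤ, (x₀ : ℤ) ≤ |x| → ((x + p ∈ S) ↔ x ∈ S)) :
    ∀ m : ℕ, ∀ x : ℤ, (x₀ : ℤ) + m * p ≤ |x| → ((x + m * p ∈ S) ↔ x ∈ S) := by
  intro m
  induction m with
  | zero => intro x hx; simp
  | succ m ih =>
    intro x hx
    have h1 : (x₀ : ℤ) ≤ |x + m * p| := by
      have habs : |(-(m * (p:ℤ)))| = m * p := by
        rw [abs_neg, abs_of_nonneg (by positivity)]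
      have := abs_sub_abs_le_abs_sub x (-(m * (p:ℤ)))
      rw [sub_neg_eq_add, habs] at this
      push_cast at hx this ⊢
      nlinarith [abs_nonneg (x + m * p), abs_nonneg x, this, habs,
        (by positivity : (0:ℤ) ≤ (p:ℤ)), (by positivity : (0:ℤ) ≤ (m:ℤ))]
    have h2 : (x₀ : ℤ) + m * p ≤ |x| := by
      push_cast at hx ⊢
      nlinarith [(by positivity : (0:ℤ) ≤ (p:ℤ))]
    have key := h (x + m * p) h1
    have : x + (m + 1 : ℕ) * p = (x + m * p) + p := by push_cast; ring
    rw [this, key]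
    exact ih x h2

lemma shift_nat_sub (S : Set ℤ) (p : ℕ) (x₀ : ℕ)
    (h : ∀ x : ℤ, (x₀ : ℤ) ≤ |x| → ((x + p ∈ S) ↔ x ∈ S)) :
    ∀ m : ℕ, ∀ x : ℤ, (x₀ : ℤ) + m * p ≤ |x| → ((x - m * p ∈ S) ↔ x ∈ S) := by
  intro m
  induction m with
  | zero => intro x hx; simp
  | succ m ih =>
    intro x hx
    have h1 : (x₀ : ℤ) ≤ |x - (m + 1 : ℕ) * p| := by
      have := abs_sub_abs_le_abs_sub x ((m + 1 : ℕ) * (p:ℤ))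
      have habs : |((m + 1 : ℕ) * (p:ℤ))| = (m + 1 : ℕ) * p := by
        rw [abs_of_nonneg (by positivity)]
      push_cast at hx this habs ⊢
      nlinarith [abs_nonneg (x - ((m:ℤ) + 1) * p), abs_nonneg x, this, habs]
    have h2 : (x₀ : ℤ) + m * p ≤ |x| := by
      push_cast at hx ⊢
      nlinarith [(by positivity : (0:ℤ) ≤ (p:ℤ))]
    have key := h (x - (m + 1 : ℕ) * p) h1
    have heq : (x - (m + 1 : ℕ) * p) + p = x - m * p := by push_cast; ring
    rw [heq] at key
    exact key.symm.trans (ih x h2)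

lemma shift_int (S : Set ℤ) (p : ℕ) (x₀ : ℕ)
    (h : ∀ x : ℤ, (x₀ : ℤ) ≤ |x| → ((x + p ∈ S) ↔ x ∈ S)) :
    ∀ n : ℤ, ∀ x : ℤ, (x₀ : ℤ) + |n * p| ≤ |x| → ((x + n * p ∈ S) ↔ x ∈ S) := by
  intro n x hx
  rcases le_or_gt 0 n with hn | hn
  · obtain ⟨m, rfl⟩ := Int.eq_ofNat_of_zero_le hn
    have : |(m : ℤ) * p| = m * p := abs_of_nonneg (by positivity)
    rw [this] at hx
    exact shift_nat_add S p x₀ h m x hx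
  · obtain ⟨m, rfl⟩ : ∃ m : ℕ, n = -(m : ℤ) := ⟨n.natAbs, by omega⟩
    have : |(-(m : ℤ)) * p| = m * p := by
      rw [neg_mul, abs_neg, abs_of_nonneg (by positivity)]
    rw [this] at hx
    have heq : x + (-(m:ℤ)) * p = x - m * p := by ring
    rw [heq]
    exact shift_nat_sub S p x₀ h m x hx

theorem gcd_is_period (S : Set ℤ) (p₁ p₂ : ℕ)
    (h₁ : IsPeriod S p₁) (h₂ : IsPeriod S p₂) :
    IsPeriod S (Nat.gcd p₁ p₂) := by
  obtain ⟨x₁, hx₁⟩ := h₁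
  obtain ⟨x₂, hx₂⟩ := h₂
  set u := Nat.gcdA p₁ p₂
  set v := Nat.gcdB p₁ p₂
  have hbez : (Nat.gcd p₁ p₂ : ℤ) = p₁ * u + p₂ * v := Nat.gcd_eq_gcd_ab p₁ p₂
  set A := (u * p₁).natAbs
  set B := (v * p₂).natAbs
  refine ⟨x₁ + x₂ + A + B, ?_⟩
  intro x hx
  have habsA : |u * (p₁:ℤ)| = (A:ℤ) := (Int.abs_eq_natAbs _)
  have habsB : |v * (p₂:ℤ)| = (B:ℤ) := (Int.abs_eq_natAbs _)
  have step1 : (x + u * p₁ ∈ S) ↔ x ∈ S := by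
    apply shift_int S p₁ x₁ hx₁ u x
    push_cast at hx ⊢
    rw [habsA]
    linarith [(by positivity : (0:ℤ) ≤ (x₂:ℤ)), (by positivity : (0:ℤ) ≤ (B:ℤ))]
  have hy : (x₂ : ℤ) + |v * (p₂:ℤ)| ≤ |x + u * p₁| := by
    have := abs_sub_abs_le_abs_sub x (-(u * (p₁:ℤ)))
    rw [sub_neg_eq_add, abs_neg] at this
    push_cast at hx
    rw [habsB]
    rw [habsA] at this
    linarith [(by positivity : (0:ℤ) ≤ (x₁:ℤ))]
  have step2 : ((x + u * p₁) + v * p₂ ∈ S) ↔ (x + u * p₁) ∈ S :=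
    shift_int S p₂ x₂ hx₂ v (x + u * p₁) hy
  have heq : x + (Nat.gcd p₁ p₂ : ℤ) = (x + u * p₁) + v * p₂ := by
    rw [hbez]; ring
  rw [heq, step2, step1]
end

section
/- Given the projection of a solution set of a system of linear Diophantine equations: if the set P = {x₁ : ∃x₂,…,xₖ ∈ ℤ, A(x₁,…,xₖ) = b} ⊆ ℤ is infinite, then P contains a negative number. -/
theorem diophProj_infinite_contains_negative (l k : ℕ)
    (A : Matrix (Fin l) (Fin (k + 1)) ℤ) (b : Fin l → ℤ)
    (hInf : {x : ℤ | ∃ z : Fin k → ℤ, A.mulVec (Fin.cons x z) = b}.Infinite) :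
    ∃ x ∈ {x : ℤ | ∃ z : Fin k → ℤ, A.mulVec (Fin.cons x z) = b}, x < 0 := by
  obtain ⟨x, hx, y, hy, hxy⟩ := hInf.nontrivial
  obtain ⟨z, hz⟩ := hx
  obtain ⟨w, hw⟩ := hy
  set d : ℤ := y - x with hd
  have hdne : d ≠ 0 := sub_ne_zero.mpr (Ne.symm hxy)
  set n : ℤ := -d * ((x.natAbs : ℤ) + 1) with hn
  refine ⟨x + n * d, ⟨fun i => z i + n * (w i - z i), ?_⟩, ?_⟩
  · have hvec : (Fin.cons (x + n * d) (fun i => z i + n * (w i - z i)) : Fin (k+1) → ℤ)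
        = Fin.cons x z + n • (Fin.cons y w - Fin.cons x z) := by
      funext i
      cases i using Fin.cases with
      | zero => simp [hd]
      | succ j => simp
    rw [hvec, Matrix.mulVec_add, Matrix.mulVec_smul, Matrix.mulVec_sub, hz, hw]
    simp
  · have h1 : (1:ℤ) ≤ d ^ 2 := by
      have h0 : d ^ 2 ≠ 0 := pow_ne_zero 2 hdne
      have h0' : 0 ≤ d ^ 2 := sq_nonneg d
      omega
    have h2 : x ≤ (x.natAbs : ℤ) := Int.le_natAbs
    have h3 : n * d = -(d ^ 2) * ((x.natAbs : ℤ) + 1) := by rw [hn]; ring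
    nlinarith [Int.natCast_nonneg x.natAbs]
end
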